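/- Let A be a finite-dimensional algebra over a field and let I be a two-sided ideal of A. Suppose that the category of finitely generated A-modules has only finitely many indecomposable modules up to isomorphism, and that the category of finitely generated A/I-modules has the same (finite) number of indecomposable modules up to isomorphism. Then I = 0. -/

import Mathlib

open CategoryTheory

noncomputable section

/-- A module is indecomposable if it is nonzero and is not the internal direct sum of
two nonzero submodules. -/
def IsIndecModule (R : Type) [Ring R] (M : Type) [AddCommGroup M] [Module R M] : Prop :=
  Nontrivial M ∧ ∀ N₁ N₂ : Submodule R M, IsCompl N₁ N₂ → N₁ = ⊥ ∨ N₂ = ⊥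

/-- The category of finitely generated indecomposable `R`-modules. -/
abbrev FGIndecModules (R : Type) [Ring R] : Type 1 :=
  CategoryTheory.ObjectProperty.FullSubcategory
    (fun M : ModuleCat.{0} R => Module.Finite R M ∧ IsIndecModule R M)

/-- The type of isomorphism classes of finitely generated indecomposable
`R`-modules. -/
abbrev IndecIsoClasses (R : Type) [Ring R] : Type 1 :=
  Quotient (CategoryTheory.isIsomorphicSetoid (FGIndecModules R))

section Restrict

variable {A : Type} [Ring A] (I : TwoSidedIdeal A)

private lemma pi_surjective : Function.Surjective (I.ringCon.mk') :=
  fun x => Quotient.inductionOn' x fun a => ⟨a, rfl⟩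

private lemma smul_def_restrict {M : ModuleCat I.ringCon.Quotient} (a : A)
    (x : (ModuleCat.restrictScalars I.ringCon.mk').obj M) :
    a • x = (I.ringCon.mk' a • x : M) := rfl

/-- Lift an `A`-submodule of a restricted module to a submodule over the quotient. -/
private def liftSubmodule (M : ModuleCat I.ringCon.Quotient)
    (N : Submodule A ((ModuleCat.restrictScalars I.ringCon.mk').obj M)) :
    Submodule I.ringCon.Quotient M where
  carrier := {x : M | x ∈ N}
  add_mem' := N.add_mem
  zero_mem' := N.zero_mem
  smul_mem' := by
    intro q x hx
    obtain ⟨a, rfl⟩ := pi_surjective I q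
    exact N.smul_mem a hx

private lemma restrict_finite (M : ModuleCat I.ringCon.Quotient)
    (h : Module.Finite I.ringCon.Quotient M) :
    Module.Finite A ((ModuleCat.restrictScalars I.ringCon.mk').obj M) := by
  obtain ⟨s, hs⟩ := Module.finite_def.1 h
  refine ⟨⟨s, ?_⟩⟩
  rw [eq_top_iff]
  rintro x -
  have hx : (show M from x) ∈ Submodule.span I.ringCon.Quotient (s : Set M) := hs ▸ Submodule.mem_top
  refine Submodule.span_induction (fun y hy => Submodule.subset_span hy)
    (Submodule.zero_mem _) (fun y z _ _ hy hz => Submodule.add_mem _ hy hz) ?_ hx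
  intro q y _ hy
  obtain ⟨a, rfl⟩ := pi_surjective I q
  exact Submodule.smul_mem _ a hy

private lemma mem_liftSubmodule {M : ModuleCat I.ringCon.Quotient}
    {N : Submodule A ((ModuleCat.restrictScalars I.ringCon.mk').obj M)} {x : M} :
    x ∈ liftSubmodule I M N ↔ x ∈ N := Iff.rfl

private lemma restrict_indec (M : ModuleCat I.ringCon.Quotient)
    (h : IsIndecModule I.ringCon.Quotient M) :
    IsIndecModule A ((ModuleCat.restrictScalars I.ringCon.mk').obj M) := by
  refine ⟨h.1, fun N₁ N₂ hc => ?_⟩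
  have hc' : IsCompl (liftSubmodule I M N₁) (liftSubmodule I M N₂) := by
    constructor
    · rw [disjoint_iff, eq_bot_iff]
      intro x hx
      rw [Submodule.mem_inf, mem_liftSubmodule, mem_liftSubmodule] at hx
      have hx0 : x = 0 :=
        (Submodule.mem_bot (M := (ModuleCat.restrictScalars I.ringCon.mk').obj M) A).1
          (hc.disjoint.le_bot ⟨hx.1, hx.2⟩)
      exact (Submodule.mem_bot _).2 hx0
    · rw [codisjoint_iff, eq_top_iff]
      rintro x -
      have ht : N₁ ⊔ N₂ = ⊤ := codisjoint_iff.1 hc.codisjoint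
      have hx2 : ∀ w : (ModuleCat.restrictScalars I.ringCon.mk').obj M, w ∈ N₁ ⊔ N₂ :=
        fun w => ht ▸ Submodule.mem_top
      obtain ⟨y, hy, z, hz, rfl⟩ := Submodule.mem_sup.1 (hx2 x)
      exact Submodule.add_mem_sup (mem_liftSubmodule I |>.2 hy) (mem_liftSubmodule I |>.2 hz)
  rcases h.2 _ _ hc' with h1 | h1
  · left
    rw [eq_bot_iff]
    intro x hx
    exact (Submodule.mem_bot A).2 <| (Submodule.mem_bot _).1 <|
      h1 ▸ (mem_liftSubmodule I |>.2 hx)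
  · right
    rw [eq_bot_iff]
    intro x hx
    exact (Submodule.mem_bot A).2 <| (Submodule.mem_bot _).1 <|
      h1 ▸ (mem_liftSubmodule I |>.2 hx)

/-- Restriction of scalars, on finitely generated indecomposable modules. -/
private def restrictObj (M : FGIndecModules I.ringCon.Quotient) : FGIndecModules A :=
  ⟨(ModuleCat.restrictScalars I.ringCon.mk').obj M.1,
    restrict_finite I M.1 M.2.1, restrict_indec I M.1 M.2.2⟩

/-- Upgrade an `A`-linear equivalence between restricted modules to a linear equivalence
over the quotient. -/
private def qEquiv {M N : ModuleCat I.ringCon.Quotient}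
    (f : (ModuleCat.restrictScalars I.ringCon.mk').obj M ≃ₗ[A]
      (ModuleCat.restrictScalars I.ringCon.mk').obj N) : M ≃ₗ[I.ringCon.Quotient] N where
  toFun := f
  invFun := f.symm
  map_add' := f.map_add
  map_smul' := by
    intro q x
    obtain ⟨a, rfl⟩ := pi_surjective I q
    exact f.map_smul a x
  left_inv := f.left_inv
  right_inv := f.right_inv

/-- Restriction of scalars on isomorphism classes. -/
private def restrictClass : IndecIsoClasses I.ringCon.Quotient → IndecIsoClasses A :=
  Quotient.map (restrictObj I) (fun M N h => by
    obtain ⟨e⟩ := h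
    exact ⟨(ObjectProperty.ι _).preimageIso
      ((ModuleCat.restrictScalars I.ringCon.mk').mapIso
        ((ObjectProperty.ι _).mapIso e))⟩)

private lemma restrictClass_injective : Function.Injective (restrictClass I) := by
  intro x y
  refine Quotient.inductionOn₂ x y fun M N h => ?_
  obtain ⟨e⟩ := Quotient.exact h
  exact Quotient.sound ⟨(ObjectProperty.ι _).preimageIso
    (LinearEquiv.toModuleIso
      (qEquiv I ((ObjectProperty.ι _).mapIso e).toLinearEquiv))⟩

end Restrict

private lemma ann_aux (K A : Type) [Field K] [Ring A] [Algebra K A] [FiniteDimensional K A]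
    (I : TwoSidedIdeal A)
    (hind : ∀ (N : Type) [AddCommGroup N] [Module A N], Module.Finite A N → IsIndecModule A N →
      ∀ i ∈ I, ∀ x : N, i • x = 0) :
    ∀ (n : ℕ) (M : Type) [AddCommGroup M] [Module A M] [Module K M] [IsScalarTower K A M],
      Module.Finite A M → Module.finrank K M ≤ n → ∀ i ∈ I, ∀ x : M, i • x = 0 := by
  intro n
  induction n with
  | zero =>
    intro M _ _ _ _ hM hrank i hi x
    haveI : FiniteDimensional K M := Module.Finite.trans A M
    haveI : Subsingleton M := Module.finrank_zero_iff.1 (Nat.le_zero.1 hrank)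
    exact Subsingleton.elim _ _
  | succ n ih =>
    intro M _ _ _ _ hM hrank i hi x
    haveI : FiniteDimensional K M := Module.Finite.trans A M
    rcases subsingleton_or_nontrivial M with hM' | hM'
    · exact Subsingleton.elim _ _
    by_cases hin : IsIndecModule A M
    · exact hind M hM hin i hi x
    · rw [IsIndecModule] at hin
      push_neg at hin
      obtain ⟨N₁, N₂, hc, h1, h2⟩ := hin hM'
      haveI : IsNoetherian A M :=
        isNoetherian_of_tower K (inferInstance : IsNoetherian K M)
      have key : ∀ N : Submodule A M, N ≠ ⊤ → ∀ y ∈ N, i • y = 0 := by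
        intro N hN y hy
        haveI : Module.Finite A N := Module.Finite.iff_fg.2 (IsNoetherian.noetherian N)
        have hrk : Module.finrank K N ≤ n := by
          have e : (N.restrictScalars K) ≃ₗ[K] N :=
            (Submodule.restrictScalarsEquiv K A M N).restrictScalars K
          rw [← e.finrank_eq]
          have hne : N.restrictScalars K < ⊤ := by
            rw [lt_top_iff_ne_top]
            intro h
            apply hN
            rw [eq_top_iff]
            intro z _
            exact (Submodule.restrictScalars_mem K N z).1 (h ▸ Submodule.mem_top)
          have hlt := Submodule.finrank_lt (K := K) (V := M) hne.ne
          omega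
        have := ih N (inferInstance) hrk i hi ⟨y, hy⟩
        calc i • y = ((i • (⟨y, hy⟩ : N) : N) : M) := rfl
          _ = ((0 : N) : M) := by rw [this]
          _ = 0 := rfl
      have hx : x ∈ N₁ ⊔ N₂ := by rw [codisjoint_iff.1 hc.codisjoint]; trivial
      obtain ⟨y, hy, z, hz, rfl⟩ := Submodule.mem_sup.1 hx
      have hN₁ : N₁ ≠ ⊤ := by
        intro h
        apply h2
        rw [eq_bot_iff]
        intro w hw
        exact hc.disjoint.le_bot (Submodule.mem_inf.2 ⟨h ▸ Submodule.mem_top, hw⟩)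
      have hN₂ : N₂ ≠ ⊤ := by
        intro h
        apply h1
        rw [eq_bot_iff]
        intro w hw
        exact hc.disjoint.le_bot (Submodule.mem_inf.2 ⟨hw, h ▸ Submodule.mem_top⟩)
      rw [smul_add, key N₁ hN₁ y hy, key N₂ hN₂ z hz, add_zero]

/-- Lemma: an ideal with as many indecomposables over the quotient as
over the algebra is zero.  Let `A` be a finite-dimensional algebra over a field `K`
and `I` a two-sided ideal of `A`.  Suppose the category of finitely generated
`A`-modules has only finitely many indecomposable modules up to isomorphism, and that
the category of finitely generated `A/I`-modules has the same finite number of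
indecomposable modules up to isomorphism.  Then `I = 0`. -/
theorem ideal_eq_zero_of_same_number_of_indecomposables
    (K A : Type) [Field K] [Ring A] [Algebra K A] [FiniteDimensional K A]
    (I : TwoSidedIdeal A)
    (hfin : Finite (IndecIsoClasses A))
    (heq : Nat.card (IndecIsoClasses A) = Nat.card (IndecIsoClasses I.ringCon.Quotient)) :
    I = ⊥ := by
  have hbij : Function.Bijective (restrictClass I) :=
    (Nat.bijective_iff_injective_and_card _).2 ⟨restrictClass_injective I, heq.symm⟩
  -- every indecomposable f.g. A-module is annihilated by I
  have hind : ∀ (N : Type) [AddCommGroup N] [Module A N], Module.Finite A N →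
      IsIndecModule A N → ∀ i ∈ I, ∀ x : N, i • x = 0 := by
    intro N _ _ hNf hNi i hi x
    obtain ⟨q, hq⟩ := hbij.2 (⟦⟨ModuleCat.of A N, hNf, hNi⟩⟧)
    revert hq
    refine Quotient.inductionOn q fun M hq => ?_
    obtain ⟨e⟩ := Quotient.exact hq
    let f := ((ObjectProperty.ι _).mapIso e).toLinearEquiv
    have hpi : I.ringCon.mk' i = 0 := (RingCon.eq _).2 (I.mem_iff i |>.1 hi)
    have h0 : i • (f.symm x) = 0 := by
      exact (smul_def_restrict I i (f.symm x)).trans (by rw [hpi]; exact zero_smul _ (show M.obj from f.symm x))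
    calc i • x = i • f (f.symm x) := by rw [f.apply_symm_apply]
      _ = f (i • f.symm x) := (map_smul f i _).symm
      _ = f 0 := by rw [h0]
      _ = 0 := map_zero f
  have hann := ann_aux K A I hind (Module.finrank K A) A inferInstance le_rfl
  rw [eq_bot_iff, TwoSidedIdeal.le_iff]
  intro x hx
  exact (TwoSidedIdeal.mem_bot A).2 (by simpa using hann x hx 1)

end
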